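/- The space ℝ \ ℚ of irrational numbers satisfies the locally finite 0-discs property: for every sequence of points (xₙ) in ℝ \ ℚ and every open cover 𝒰 of ℝ \ ℚ, there exist points (yₙ) in ℝ \ ℚ such that (a) for each n there is U ∈ 𝒰 containing both xₙ and yₙ, and (b) every point of ℝ \ ℚ has a neighbourhood meeting only finitely many of the yₙ. -/

import Mathlib

/-- The space of irrationals satisfies the locally finite 0-discs property:
any sequence of points can be approximated, with respect to any open cover,
by a locally finite sequence of points. -/
theorem stmt_11 (x : ℕ → {r : ℝ // Irrational r})
    (𝒰 : Set (Set {r : ℝ // Irrational r}))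
    (hopen : ∀ U ∈ 𝒰, IsOpen U) (hcover : ⋃₀ 𝒰 = Set.univ) :
    ∃ y : ℕ → {r : ℝ // Irrational r},
      (∀ n, ∃ U ∈ 𝒰, x n ∈ U ∧ y n ∈ U) ∧
      (∀ z : {r : ℝ // Irrational r}, ∃ V ∈ nhds z, {n | y n ∈ V}.Finite) := by
  classical
  -- the "admissible radii" set at a point
  set S : {r : ℝ // Irrational r} → Set ℝ :=
    fun p => {δ | 0 < δ ∧ δ ≤ 1 ∧ ∃ U ∈ 𝒰, Metric.ball p δ ⊆ U} with hS
  have hSne : ∀ p, (S p).Nonempty := by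
    intro p
    have hp : p ∈ ⋃₀ 𝒰 := by rw [hcover]; trivial
    obtain ⟨U, hU, hpU⟩ := hp
    obtain ⟨ε, hε, hball⟩ := Metric.isOpen_iff.1 (hopen U hU) p hpU
    exact ⟨min ε 1, by positivity, min_le_right _ _,
      U, hU, (Metric.ball_subset_ball (min_le_left _ _)).trans hball⟩
  have hbdd : ∀ p, BddAbove (S p) := fun p => ⟨1, fun δ hδ => hδ.2.1⟩
  have hρpos : ∀ p, 0 < sSup (S p) := by
    intro p
    obtain ⟨δ, h⟩ := hSne p
    exact lt_of_lt_of_le h.1 (le_csSup (hbdd p) h)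
  -- choose near-maximal admissible radii for the points x n
  have hrex : ∀ n : ℕ, ∃ r, r ∈ S (x n) ∧ sSup (S (x n)) / 2 < r := by
    intro n
    obtain ⟨r, hrS, hrlt⟩ := exists_lt_of_lt_csSup (hSne (x n)) (half_lt_self (hρpos (x n)))
    exact ⟨r, hrS, hrlt⟩
  choose r hrS hrhalf using hrex
  have hrpos : ∀ n, 0 < r n := fun n => (hrS n).1
  have hrle : ∀ n, r n ≤ 1 := fun n => (hrS n).2.1
  have hrU : ∀ n, ∃ U ∈ 𝒰, Metric.ball (x n) (r n) ⊆ U := fun n => (hrS n).2.2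
  -- near-maximality: any admissible radius is < 2 * r n
  have hrmax : ∀ n, ∀ δ ∈ S (x n), δ < 2 * r n := by
    intro n δ hδ
    have h1 : δ ≤ sSup (S (x n)) := le_csSup (hbdd (x n)) hδ
    linarith [hrhalf n]
  -- the rational approximations
  set D : ℕ → ℕ := fun n => ⌈4 / r n⌉₊ with hD
  have hDge : ∀ n, 4 / r n ≤ (D n : ℝ) := fun n => Nat.le_ceil _
  have hD4 : ∀ n, 4 ≤ (D n : ℝ) := by
    intro n
    have h2 : (4:ℝ) ≤ 4 / r n := by
      rw [le_div_iff₀ (hrpos n)]; nlinarith [hrle n, hrpos n]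
    linarith [hDge n]
  have hDpos : ∀ n, 0 < (D n : ℝ) := fun n => by linarith [hD4 n]
  set q : ℕ → ℝ := fun n => (round ((x n).val * D n) : ℝ) / D n with hq
  have hqx : ∀ n, |q n - (x n).val| ≤ r n / 8 := by
    intro n
    have hD0 : (D n : ℝ) ≠ 0 := ne_of_gt (hDpos n)
    have h0 : q n - (x n).val =
        -(((x n).val * D n) - (round ((x n).val * D n) : ℝ)) / D n := by
      simp only [hq]
      rw [eq_div_iff hD0, sub_mul, div_mul_cancel₀ _ hD0]
      ring
    rw [h0, abs_div, abs_neg, abs_of_pos (hDpos n)]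
    have h1 := abs_sub_round ((x n).val * D n)
    rw [div_le_iff₀ (hDpos n)]
    have h3 : r n / 8 * (4 / r n) ≤ r n / 8 * D n := by
      apply mul_le_mul_of_nonneg_left (hDge n)
      linarith [hrpos n]
    have h4 : r n / 8 * (4 / r n) = 1/2 := by
      field_simp [ne_of_gt (hrpos n)]
      ring
    linarith
  -- choose the irrational points y
  have hyex : ∀ n : ℕ, ∃ Y : ℝ, Irrational Y ∧ |Y - q n| < min (r n / 8) (1 / (n + 1)) := by
    intro n
    have hε : 0 < min (r n / 8) (1 / (n + 1 : ℝ)) := by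
      apply lt_min (by linarith [hrpos n]); positivity
    obtain ⟨Y, hY, hd⟩ := Metric.mem_closure_iff.1 (dense_irrational (q n)) _ hε
    exact ⟨Y, hY, by rwa [Real.dist_eq, abs_sub_comm] at hd⟩
  choose Y hYirr hYq using hyex
  have hYq1 : ∀ n, |Y n - q n| < r n / 8 := fun n => lt_of_lt_of_le (hYq n) (min_le_left _ _)
  have hYq2 : ∀ n, |Y n - q n| < 1 / (n + 1 : ℝ) :=
    fun n => lt_of_lt_of_le (hYq n) (min_le_right _ _)
  set y : ℕ → {r : ℝ // Irrational r} := fun n => ⟨Y n, hYirr n⟩ with hy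
  have hyx : ∀ n, dist (y n) (x n) < r n / 4 := by
    intro n
    rw [Subtype.dist_eq, Real.dist_eq]
    calc |Y n - (x n).val| ≤ |Y n - q n| + |q n - (x n).val| := abs_sub_le _ _ _
      _ < r n / 8 + r n / 8 := add_lt_add_of_lt_of_le (hYq1 n) (hqx n)
      _ = r n / 4 := by ring
  refine ⟨y, ?_, ?_⟩
  · intro n
    obtain ⟨U, hU, hball⟩ := hrU n
    refine ⟨U, hU, hball (Metric.mem_ball_self (hrpos n)), hball ?_⟩
    have := hyx n
    simp only [Metric.mem_ball]
    linarith [hrpos n]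
  · intro z
    have hz : z ∈ ⋃₀ 𝒰 := by rw [hcover]; trivial
    obtain ⟨U, hU, hzU⟩ := hz
    obtain ⟨ρ₀, hρ₀, hballU⟩ := Metric.isOpen_iff.1 (hopen U hU) z hzU
    set ρ := min ρ₀ 1 with hρdef
    have hρpos' : 0 < ρ := lt_min hρ₀ one_pos
    have hρ1 : ρ ≤ 1 := min_le_right _ _
    have hρρ₀ : ρ ≤ ρ₀ := min_le_left _ _
    -- if x n is close to z then r n is not too small
    have claimA : ∀ n, dist z (x n) < ρ / 2 → ρ / 4 < r n := by
      intro n hn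
      have hmem : ρ / 2 ∈ S (x n) := by
        refine ⟨by positivity, by linarith, U, hU, ?_⟩
        intro w hw
        apply hballU
        rw [Metric.mem_ball] at hw ⊢
        rw [dist_comm] at hn
        calc dist w z ≤ dist w (x n) + dist (x n) z := dist_triangle _ _ _
          _ < ρ/2 + ρ/2 := add_lt_add hw hn
          _ ≤ ρ₀ := by linarith
      have := hrmax n _ hmem
      linarith
    set Dz : ℕ := ⌈16 / ρ⌉₊ with hDz
    set L : ℕ := Nat.factorial Dz with hL
    have hLpos : 0 < (L : ℝ) := by
      have := Nat.factorial_pos Dz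
      exact_mod_cast this
    set t := |z.val * L - (round (z.val * L) : ℝ)| with ht
    have htpos : 0 < t := by
      rcases lt_or_eq_of_le (abs_nonneg (z.val * L - (round (z.val * L) : ℝ))) with h | h
      · exact h
      · exfalso
        have h0 : z.val * L - (round (z.val * L) : ℝ) = 0 := by
          have := abs_eq_zero.1 h.symm
          exact this
        apply z.2
        refine ⟨((round (z.val * (L:ℝ)) : ℤ) : ℚ) / (L : ℚ), ?_⟩
        have hL0 : (L:ℝ) ≠ 0 := ne_of_gt hLpos
        push_cast
        field_simp
        linarith
    set ε := min (ρ/8) (t/(2*L)) with hε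
    have hεpos : 0 < ε := lt_min (by positivity) (by positivity)
    refine ⟨Metric.ball z ε, Metric.ball_mem_nhds z hεpos, ?_⟩
    apply Set.Finite.subset (Set.finite_Iio ⌈2*L/t⌉₊)
    intro n hn
    simp only [Set.mem_setOf_eq, Metric.mem_ball] at hn
    have hdist : |Y n - z.val| < ε := by
      rw [Subtype.dist_eq, Real.dist_eq] at hn
      exact hn
    have hyx' : |Y n - (x n).val| < r n / 4 := by
      have := hyx n
      rwa [Subtype.dist_eq, Real.dist_eq] at this
    -- r n must be large
    have hrn : ρ/4 < r n := by
      by_contra h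
      push_neg at h
      have hd : dist z (x n) < ρ/2 := by
        rw [Subtype.dist_eq, Real.dist_eq]
        have h2 : |z.val - Y n| < ε := by rwa [abs_sub_comm] at hdist
        have hεle : ε ≤ ρ/8 := min_le_left _ _
        calc |z.val - (x n).val| ≤ |z.val - Y n| + |Y n - (x n).val| := abs_sub_le _ _ _
          _ < ε + r n / 4 := add_lt_add h2 hyx'
          _ ≤ ρ/8 + ρ/16 := by linarith
          _ < ρ/2 := by linarith
      exact absurd (claimA n hd) (by linarith)
    -- hence D n divides L
    have hDnpos : 0 < D n := by
      by_contra h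
      push_neg at h
      interval_cases hDn : D n
      · have := hD4 n; rw [hDn] at this; norm_num at this
    have hDnle : D n ≤ Dz := by
      apply Nat.ceil_le_ceil
      rw [div_le_div_iff₀ (hrpos n) hρpos']
      nlinarith
    have hdvd : D n ∣ L := Nat.dvd_factorial hDnpos hDnle
    set k : ℕ := L / D n with hk
    have hDk : ((D n : ℝ)) * k = L := by
      have : D n * k = L := Nat.mul_div_cancel' hdvd
      exact_mod_cast this
    -- q n is an integer multiple of 1 / L
    set m : ℤ := round ((x n).val * D n) * k with hm
    have hqm : q n * L = (m : ℝ) := by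
      have hD0 : (D n : ℝ) ≠ 0 := ne_of_gt (hDpos n)
      rw [hq, hm]
      push_cast
      rw [← hDk]
      field_simp
    -- distance from z to q n is at least t / L
    have hlow : t / L ≤ |z.val - q n| := by
      have h1 : |z.val * L - (m : ℝ)| ≥ t := round_le (z.val * L) m
      have h2 : z.val - q n = (z.val * L - m) / L := by
        rw [← hqm]
        field_simp
      rw [h2, abs_div, abs_of_pos hLpos]
      gcongr
    -- but z is close to q n
    have hup : |z.val - q n| < t/(2*L) + 1/(n+1) := by
      have h2 : |z.val - Y n| < ε := by rwa [abs_sub_comm] at hdist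
      have hεle : ε ≤ t/(2*L) := min_le_right _ _
      calc |z.val - q n| ≤ |z.val - Y n| + |Y n - q n| := abs_sub_le _ _ _
        _ < ε + 1/(n+1) := add_lt_add h2 (hYq2 n)
        _ ≤ t/(2*L) + 1/(n+1) := by linarith
    -- conclude n is bounded
    have hnb : (n : ℝ) < 2*L/t := by
      have h3 : t/(2*L) < 1/(n+1) := by
        have : t/L = t/(2*L) + t/(2*L) := by ring
        rw [this] at hlow
        linarith
      have hn1 : (0:ℝ) < (n:ℝ) + 1 := by positivity
      rw [div_lt_div_iff₀ (by positivity) hn1] at h3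
      rw [lt_div_iff₀ htpos]
      nlinarith
    exact Set.mem_Iio.2 (Nat.lt_ceil.2 hnb)
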